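/- Statement (A) is equivalent to the following dominating-function property: for any family F of functions from ω₁ to ω₁ with |F| ≤ ω₂, there exists an injective function g : ω₁ → ω₁ such that for every f ∈ F there exists i < ω₁ such that for all γ ∈ ω₁ \ i, f(γ) < g(γ). -/

import Mathlib

noncomputable section

abbrev Ordi : Type 1 := Ordinal.{0}

/-- The ordinal `ω₁`. -/
def w1 : Ordi := (Cardinal.aleph 1).ord

/-- `C` is a club (closed and unbounded) subset of `κ`. -/
def IsClubIn (C : Set Ordi) (κ : Ordi) : Prop :=
  C ⊆ Set.Iio κ ∧ (∀ α < κ, ∃ β ∈ C, α ≤ β) ∧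
    ∀ α, 0 < α → α < κ → (∀ β < α, ∃ γ ∈ C, β < γ ∧ γ < α) → α ∈ C

/-- Statement (A): any family of at most `ω₂`-many club subsets of `ω₁` can be
diagonalized by a single club `E` such that `E \ C` is countable for every `C`
in the family. -/
def StatementA : Prop :=
  ∀ 𝒞 : Set (Set Ordi), (∀ C ∈ 𝒞, IsClubIn C w1) →
    Cardinal.mk ↥𝒞 ≤ Cardinal.aleph 2 →
    ∃ E : Set Ordi, IsClubIn E w1 ∧ ∀ C ∈ 𝒞, (E \ C).Countable

open Cardinal Set in
lemma w1_isLimit : Order.IsSuccLimit w1 := Cardinal.isSuccLimit_ord (aleph0_le_aleph 1)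

lemma w1_pos : 0 < w1 := w1_isLimit.pos

lemma succ_lt_w1 {a : Ordi} (h : a < w1) : a + 1 < w1 := by
  rw [Ordinal.add_one_eq_succ]
  exact w1_isLimit.succ_lt h

lemma lt_succ_self (a : Ordi) : a < a + 1 := by
  rw [Ordinal.add_one_eq_succ]; exact Order.lt_succ a

lemma countable_Iio_w1 {α : Ordi} (h : α < w1) : (Set.Iio α).Countable := by
  rw [Cardinal.countable_iff_lt_aleph_one, Ordinal.mk_Iio_ordinal, Cardinal.lift_lt_aleph_one]
  exact Cardinal.lt_ord.mp h

lemma countable_Iic_w1 {α : Ordi} (h : α < w1) : (Set.Iic α).Countable := by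
  refine (countable_Iio_w1 (succ_lt_w1 h)).mono fun x hx => ?_
  exact lt_of_le_of_lt hx (lt_succ_self α)

/-- A countable set of ordinals below `ω₁` is bounded below `ω₁`. -/
lemma bdd_of_countable (S : Set Ordi) (hc : S.Countable) (hS : ∀ x ∈ S, x < w1) :
    ∃ b < w1, ∀ x ∈ S, x ≤ b := by
  rcases S.eq_empty_or_nonempty with rfl | hne
  · exact ⟨0, w1_pos, by simp⟩
  obtain ⟨f, rfl⟩ := hc.exists_eq_range hne
  refine ⟨⨆ n, f n, ?_, ?_⟩
  · refine Cardinal.iSup_lt_ord_of_isRegular Cardinal.isRegular_aleph_one ?_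
      (fun n => hS _ ⟨n, rfl⟩)
    rw [Cardinal.mk_nat]
    exact Cardinal.aleph0_lt_aleph_one
  · rintro x ⟨n, rfl⟩
    exact le_ciSup (Ordinal.bddAbove_range f) n

/-- The set of closure points of `h` below `ω₁`. -/
def clSet (h : Ordi → Ordi) : Set Ordi := {α | α < w1 ∧ ∀ γ < α, h γ < α}

lemma exists_closure_bound (h : Ordi → Ordi) (hh : ∀ γ < w1, h γ < w1) {x : Ordi}
    (hx : x < w1) : ∃ b, x < b ∧ b < w1 ∧ ∀ γ < x, h γ < b := by
  obtain ⟨b, hbw, hb⟩ := bdd_of_countable (insert x (h '' Set.Iio x))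
    (((countable_Iio_w1 hx).image h).insert x)
    (by rintro y (rfl | ⟨γ, hγ, rfl⟩)
        · exact hx
        · exact hh γ (hγ.trans hx))
  refine ⟨b + 1, lt_of_le_of_lt (hb x (Set.mem_insert _ _)) (lt_succ_self b),
    succ_lt_w1 hbw, fun γ hγ => ?_⟩
  exact lt_of_le_of_lt (hb _ (Set.mem_insert_of_mem _ ⟨γ, hγ, rfl⟩)) (lt_succ_self b)

lemma clSet_club (h : Ordi → Ordi) (hh : ∀ γ < w1, h γ < w1) : IsClubIn (clSet h) w1 := by
  refine ⟨fun α hα => hα.1, ?_, ?_⟩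
  · intro α hα
    set N : Ordi → Ordi := fun x => if hx : x < w1 then (exists_closure_bound h hh hx).choose
      else 0 with hNdef
    have hN : ∀ x, x < w1 → x < N x ∧ N x < w1 ∧ ∀ γ < x, h γ < N x := by
      intro x hx
      simp only [hNdef, dif_pos hx]
      exact (exists_closure_bound h hh hx).choose_spec
    set a : ℕ → Ordi := fun n => N^[n] α with hadef
    have ha : ∀ n, a n < w1 := by
      intro n
      induction n with
      | zero => exact hα
      | succ n ih =>
        have : a (n + 1) = N (a n) := Function.iterate_succ_apply' N n α
        rw [this]
        exact (hN _ ih).2.1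
    have hsucc : ∀ n, a (n + 1) = N (a n) := fun n => Function.iterate_succ_apply' N n α
    set β := ⨆ n, a n with hβdef
    have hβlt : β < w1 := by
      refine Cardinal.iSup_lt_ord_of_isRegular Cardinal.isRegular_aleph_one ?_ ha
      rw [Cardinal.mk_nat]; exact Cardinal.aleph0_lt_aleph_one
    have hle : ∀ n, a n ≤ β := fun n => le_ciSup (Ordinal.bddAbove_range a) n
    have hmem : β ∈ clSet h := by
      refine ⟨hβlt, fun γ hγ => ?_⟩
      obtain ⟨n, hn⟩ := Ordinal.lt_iSup_iff.mp hγ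
      have h1 : h γ < N (a n) := (hN _ (ha n)).2.2 γ hn
      calc h γ < N (a n) := h1
        _ = a (n + 1) := (hsucc n).symm
        _ ≤ β := hle (n + 1)
    exact ⟨β, hmem, hle 0⟩
  · intro α _ hα hcof
    refine ⟨hα, fun γ hγ => ?_⟩
    obtain ⟨e, he, hγe, heα⟩ := hcof γ hγ
    exact (he.2 γ hγe).trans heα

/-- Recursively pick increasing elements of `E`. -/
def diagFun (E : Set Ordi) : Ordi → Ordi
  | γ => sInf {β | β ∈ E ∧ γ < β ∧ ∀ δ < γ, diagFun E δ < β}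
termination_by γ => γ

lemma diagFun_spec (E : Set Ordi) (hE : IsClubIn E w1) :
    ∀ γ < w1, diagFun E γ ∈ E ∧ γ < diagFun E γ ∧ ∀ δ < γ, diagFun E δ < diagFun E γ := by
  intro γ
  induction γ using Ordinal.induction with
  | h γ IH =>
    intro hγ
    have hne : Set.Nonempty {β | β ∈ E ∧ γ < β ∧ ∀ δ < γ, diagFun E δ < β} := by
      obtain ⟨b, hbw, hb⟩ := bdd_of_countable (insert γ ((diagFun E) '' Set.Iio γ))
        (((countable_Iio_w1 hγ).image _).insert γ)
        (by rintro y (rfl | ⟨δ, hδ, rfl⟩)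
            · exact hγ
            · exact hE.1 (IH δ hδ (hδ.trans hγ)).1)
      obtain ⟨β, hβE, hβge⟩ := hE.2.1 (b + 1) (succ_lt_w1 hbw)
      refine ⟨β, hβE, ?_, ?_⟩
      · exact lt_of_lt_of_le (lt_of_le_of_lt (hb γ (Set.mem_insert _ _)) (lt_succ_self b)) hβge
      · intro δ hδ
        exact lt_of_lt_of_le (lt_of_le_of_lt
          (hb _ (Set.mem_insert_of_mem _ ⟨δ, hδ, rfl⟩)) (lt_succ_self b)) hβge
    have heq : diagFun E γ = sInf {β | β ∈ E ∧ γ < β ∧ ∀ δ < γ, diagFun E δ < β} := by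
      rw [diagFun]
    have hmem := heq ▸ csInf_mem hne
    exact ⟨hmem.1, hmem.2.1, hmem.2.2⟩

/-- Statement (A) is equivalent to the dominating-function property: for any family
`F` of functions from `ω₁` to `ω₁` with `|F| ≤ ω₂`, there is an injective
`g : ω₁ → ω₁` such that every `f ∈ F` is eventually strictly dominated by `g`. -/
theorem statementA_iff_dominating :
    StatementA ↔
      ∀ F : Set (Ordi → Ordi),
        (∀ f ∈ F, ∀ γ < w1, f γ < w1) →
        Cardinal.mk ↥F ≤ Cardinal.aleph 2 →
        ∃ g : Ordi → Ordi, Set.InjOn g (Set.Iio w1) ∧ (∀ γ < w1, g γ < w1) ∧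
          ∀ f ∈ F, ∃ i < w1, ∀ γ, i ≤ γ → γ < w1 → f γ < g γ := by
  constructor
  · -- Statement A implies dominating
    intro hA F hF hFcard
    obtain ⟨E, hE, hEC⟩ := hA (clSet '' F)
      (by rintro C ⟨f, hf, rfl⟩; exact clSet_club f (hF f hf))
      (Cardinal.mk_image_le.trans hFcard)
    refine ⟨diagFun E, ?_, ?_, ?_⟩
    · intro a ha b hb hab
      rcases lt_trichotomy a b with hlt | heq | hlt
      · exact absurd hab (ne_of_lt ((diagFun_spec E hE b hb).2.2 a hlt))
      · exact heq
      · exact absurd hab.symm (ne_of_lt ((diagFun_spec E hE a ha).2.2 b hlt))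
    · exact fun γ hγ => hE.1 (diagFun_spec E hE γ hγ).1
    · intro f hf
      obtain ⟨b, hbw, hb⟩ := bdd_of_countable (E \ clSet f) (hEC _ ⟨f, hf, rfl⟩)
        (fun x hx => hE.1 hx.1)
      refine ⟨b + 1, succ_lt_w1 hbw, fun γ hiγ hγ => ?_⟩
      have hs := diagFun_spec E hE γ hγ
      have hcl : diagFun E γ ∈ clSet f := by
        by_contra hn
        have h1 : diagFun E γ ≤ b := hb _ ⟨hs.1, hn⟩
        have h2 : b + 1 ≤ diagFun E γ := (lt_of_le_of_lt hiγ hs.2.1).le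
        exact absurd (h2.trans h1) (not_le.mpr (lt_succ_self b))
      exact hcl.2 γ hs.2.1
  · -- dominating implies Statement A
    intro hD 𝒞 h𝒞 hcard
    set fC : Set Ordi → Ordi → Ordi := fun C γ => sInf {β | β ∈ C ∧ γ < β} with hfCdef
    have hfC : ∀ C ∈ 𝒞, ∀ γ < w1, fC C γ ∈ C ∧ γ < fC C γ := by
      intro C hC γ hγ
      have hne : Set.Nonempty {β | β ∈ C ∧ γ < β} := by
        obtain ⟨β, hβ, hge⟩ := (h𝒞 C hC).2.1 (γ + 1) (succ_lt_w1 hγ)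
        exact ⟨β, hβ, lt_of_lt_of_le (lt_succ_self γ) hge⟩
      exact csInf_mem hne
    have hFdom : ∀ f ∈ (fC '' 𝒞), ∀ γ < w1, f γ < w1 := by
      rintro f ⟨C, hC, rfl⟩ γ hγ
      exact (h𝒞 C hC).1 (hfC C hC γ hγ).1
    obtain ⟨g, _, hgmap, hgdom⟩ := hD (fC '' 𝒞) hFdom (Cardinal.mk_image_le.trans hcard)
    refine ⟨clSet g, clSet_club g hgmap, ?_⟩
    intro C hC
    obtain ⟨i, hiw, hi⟩ := hgdom (fC C) ⟨C, hC, rfl⟩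
    refine (countable_Iic_w1 hiw).mono fun α hα => ?_
    by_contra hgt
    simp only [Set.mem_Iic, not_le] at hgt
    refine hα.2 ((h𝒞 C hC).2.2 α (lt_of_le_of_lt (zero_le (a := i)) hgt) hα.1.1 ?_)
    intro β hβ
    have hδα : max β i < α := max_lt hβ hgt
    have hδw : max β i < w1 := hδα.trans hα.1.1
    have h1 := hfC C hC (max β i) hδw
    refine ⟨fC C (max β i), h1.1, lt_of_le_of_lt (le_max_left β i) h1.2, ?_⟩
    calc fC C (max β i) < g (max β i) := hi (max β i) (le_max_right β i) hδw
      _ < α := hα.1.2 (max β i) hδα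

end
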